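/- Let n = 3k+2 for some integer k ≥ 0 and set j = (4n+1)/3 (an integer). Then the continued fraction of √(n²+j) is [n; 1, 1, 1, 2n repeated], with period of length 4. -/

import Mathlib

/-- The sequence of complete quotients of the continued fraction algorithm. -/
noncomputable def cfX (x : ℝ) : ℕ → ℝ
  | 0 => x
  | n + 1 =>
    if cfX x n - ⌊cfX x n⌋ = 0 then 0 else 1 / (cfX x n - ⌊cfX x n⌋)

/-- The partial quotients (continued fraction expansion) of a real number. -/
noncomputable def cfA (x : ℝ) (n : ℕ) : ℤ := ⌊cfX x n⌋

lemma cfX_zero (x : ℝ) : cfX x 0 = x := by rw [cfX]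

lemma cfX_succ_of_ne (x : ℝ) (n : ℕ) (h : cfX x n - ⌊cfX x n⌋ ≠ 0) :
    cfX x (n + 1) = 1 / (cfX x n - ⌊cfX x n⌋) := by
  rw [cfX, if_neg h]

lemma cfX_congr (x : ℝ) (a b : ℕ) (h : cfX x a = cfX x b) :
    cfX x (a + 1) = cfX x (b + 1) := by
  rw [cfX, cfX, h]

set_option maxHeartbeats 1000000 in
/-- For `n = 3k+2`, `k ≥ 0`, and `j = (4n+1)/3`, the continued fraction of
`√(n²+j)` is `[n; 1, 1, 1, 2n repeated]`, with period of length 4. -/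
theorem sqrt_cf_period_four_family (n j k : ℕ) (hn : n = 3 * k + 2)
    (hj : 3 * j = 4 * n + 1) :
    cfA (Real.sqrt ((n : ℝ) ^ 2 + (j : ℝ))) 0 = n ∧
    (∀ m : ℕ,
      cfA (Real.sqrt ((n : ℝ) ^ 2 + (j : ℝ))) (4 * m + 1) = 1 ∧
      cfA (Real.sqrt ((n : ℝ) ^ 2 + (j : ℝ))) (4 * m + 2) = 1 ∧
      cfA (Real.sqrt ((n : ℝ) ^ 2 + (j : ℝ))) (4 * m + 3) = 1 ∧
      cfA (Real.sqrt ((n : ℝ) ^ 2 + (j : ℝ))) (4 * m + 4) = 2 * n) ∧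
    sInf {p : ℕ | 0 < p ∧ ∀ m : ℕ, 1 ≤ m →
      cfA (Real.sqrt ((n : ℝ) ^ 2 + (j : ℝ))) (m + p) = cfA (Real.sqrt ((n : ℝ) ^ 2 + (j : ℝ))) m} = 4 := by
  subst hn
  have hj' : j = 4 * k + 3 := by omega
  subst hj'
  set K : ℝ := (k : ℝ) with hKdef
  have hK0 : (0:ℝ) ≤ K := Nat.cast_nonneg k
  have harg : ((3*k+2 : ℕ) : ℝ) ^ 2 + ((4*k+3 : ℕ) : ℝ) = (3*K+2)^2 + (4*K+3) := by
    push_cast; ring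
  rw [harg]
  set x : ℝ := Real.sqrt ((3*K+2)^2 + (4*K+3)) with hxdef
  have hNnn : (0:ℝ) ≤ (3*K+2)^2 + (4*K+3) := by positivity
  have hx0 : (0:ℝ) ≤ x := Real.sqrt_nonneg _
  have hxsq : x ^ 2 = 9*K^2 + 16*K + 7 := by
    rw [hxdef, Real.sq_sqrt hNnn]; ring
  have hlb : 3*K+2 < x := by nlinarith [hxsq, hx0]
  have hub : x < 3*K+3 := by nlinarith [hxsq, hx0]
  -- floor of x
  have f0 : ⌊x⌋ = 3*(k:ℤ)+2 := by
    rw [Int.floor_eq_iff]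
    constructor <;> push_cast <;> [linarith; linarith]
  have f0R : ((⌊x⌋ : ℤ) : ℝ) = 3*K+2 := by rw [f0]; push_cast; ring
  -- step 1
  have e1 : cfX x 1 = (x + (3*K+2)) / (4*K+3) := by
    rw [cfX_succ_of_ne x 0 (by rw [cfX_zero, f0R]; intro h; linarith)]
    rw [cfX_zero, f0R]
    rw [div_eq_div_iff (by linarith) (by linarith)]
    nlinarith [hxsq]
  have f1 : ⌊cfX x 1⌋ = 1 := by
    rw [e1, Int.floor_eq_iff]
    constructor
    · rw [le_div_iff₀ (by linarith)]; push_cast; linarith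
    · rw [div_lt_iff₀ (by linarith)]; push_cast; linarith
  have f1R : ((⌊cfX x 1⌋ : ℤ) : ℝ) = 1 := by rw [f1]; norm_num
  -- step 2
  have e2 : cfX x 2 = (x + (K+1)) / (2*(K+1)) := by
    rw [cfX_succ_of_ne x 1 (by rw [f1R, e1]; rw [div_sub' (by linarith : (4*K+3:ℝ) ≠ 0)]; intro h; rw [div_eq_zero_iff] at h; rcases h with h | h <;> linarith)]
    rw [f1R, e1]
    rw [div_sub' (by linarith : (4*K+3:ℝ) ≠ 0), one_div_div]
    rw [div_eq_div_iff (by linarith) (by linarith)]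
    nlinarith [hxsq]
  have f2 : ⌊cfX x 2⌋ = 1 := by
    rw [e2, Int.floor_eq_iff]
    constructor
    · rw [le_div_iff₀ (by linarith)]; push_cast; linarith
    · rw [div_lt_iff₀ (by linarith)]; push_cast; linarith
  have f2R : ((⌊cfX x 2⌋ : ℤ) : ℝ) = 1 := by rw [f2]; norm_num
  -- step 3
  have e3 : cfX x 3 = (x + (K+1)) / (4*K+3) := by
    rw [cfX_succ_of_ne x 2 (by rw [f2R, e2]; rw [div_sub' (by linarith : (2*(K+1):ℝ) ≠ 0)]; intro h; rw [div_eq_zero_iff] at h; rcases h with h | h <;> linarith)]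
    rw [f2R, e2]
    rw [div_sub' (by linarith : (2*(K+1):ℝ) ≠ 0), one_div_div]
    rw [div_eq_div_iff (by linarith) (by linarith)]
    nlinarith [hxsq]
  have f3 : ⌊cfX x 3⌋ = 1 := by
    rw [e3, Int.floor_eq_iff]
    constructor
    · rw [le_div_iff₀ (by linarith)]; push_cast; linarith
    · rw [div_lt_iff₀ (by linarith)]; push_cast; linarith
  have f3R : ((⌊cfX x 3⌋ : ℤ) : ℝ) = 1 := by rw [f3]; norm_num
  -- step 4
  have e4 : cfX x 4 = x + (3*K+2) := by
    rw [cfX_succ_of_ne x 3 (by rw [f3R, e3]; rw [div_sub' (by linarith : (4*K+3:ℝ) ≠ 0)]; intro h; rw [div_eq_zero_iff] at h; rcases h with h | h <;> linarith)]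
    rw [f3R, e3]
    rw [div_sub' (by linarith : (4*K+3:ℝ) ≠ 0), one_div_div]
    rw [div_eq_iff (by linarith)]
    nlinarith [hxsq]
  have f4 : ⌊cfX x 4⌋ = 6*(k:ℤ)+4 := by
    rw [e4, Int.floor_eq_iff]
    constructor <;> push_cast <;> [linarith; linarith]
  have f4R : ((⌊cfX x 4⌋ : ℤ) : ℝ) = 6*K+4 := by rw [f4]; push_cast; ring
  -- step 5 : back to step 1
  have e5 : cfX x 5 = cfX x 1 := by
    rw [cfX_succ_of_ne x 4 (by rw [f4R, e4]; intro h; linarith)]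
    rw [f4R, e4, e1]
    rw [div_eq_div_iff (by linarith) (by linarith)]
    nlinarith [hxsq]
  -- periodicity of the complete quotients
  have per : ∀ t : ℕ, cfX x (t + 1 + 4) = cfX x (t + 1) := by
    intro t
    induction t with
    | zero => exact e5
    | succ t ih => exact cfX_congr x (t + 1 + 4) (t + 1) ih
  -- complete quotients at 4m+r equal those at r, r ≥ 1
  have hP : ∀ m r : ℕ, cfX x (4 * m + (r + 1)) = cfX x (r + 1) := by
    intro m
    induction m with
    | zero => intro r; norm_num
    | succ m ih =>
      intro r
      have h1 : 4 * (m + 1) + (r + 1) = (4 * m + r) + 1 + 4 := by ring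
      rw [h1, per (4 * m + r)]
      have h2 : 4 * m + r + 1 = 4 * m + (r + 1) := by ring
      rw [h2, ih r]
  refine ⟨?_, ?_, ?_⟩
  · show (⌊cfX x 0⌋ : ℤ) = _
    rw [cfX_zero, f0]; push_cast; ring
  · intro m
    refine ⟨?_, ?_, ?_, ?_⟩
    · show (⌊cfX x (4*m+1)⌋ : ℤ) = 1
      rw [show 4*m+1 = 4*m+(0+1) from by ring, hP m 0]; exact f1
    · show (⌊cfX x (4*m+2)⌋ : ℤ) = 1
      rw [show 4*m+2 = 4*m+(1+1) from by ring, hP m 1]; exact f2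
    · show (⌊cfX x (4*m+3)⌋ : ℤ) = 1
      rw [show 4*m+3 = 4*m+(2+1) from by ring, hP m 2]; exact f3
    · show (⌊cfX x (4*m+4)⌋ : ℤ) = 2 * ((3*k+2 : ℕ) : ℤ)
      rw [show 4*m+4 = 4*m+(3+1) from by ring, hP m 3, f4]; push_cast; ring
  · -- the period is exactly 4
    have A1 : cfA x 1 = 1 := f1
    have A2 : cfA x 2 = 1 := f2
    have A3 : cfA x 3 = 1 := f3
    have A4 : cfA x 4 = 6*(k:ℤ)+4 := f4
    have mem4 : 4 ∈ {p : ℕ | 0 < p ∧ ∀ m : ℕ, 1 ≤ m → cfA x (m + p) = cfA x m} := by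
      refine ⟨by norm_num, ?_⟩
      intro m hm
      obtain ⟨t, rfl⟩ : ∃ t, m = t + 1 := ⟨m - 1, by omega⟩
      show (⌊cfX x (t+1+4)⌋ : ℤ) = ⌊cfX x (t+1)⌋
      rw [per t]
    apply le_antisymm
    · exact Nat.sInf_le mem4
    · apply le_csInf ⟨4, mem4⟩
      rintro p ⟨hp0, hp⟩
      by_contra hlt
      push_neg at hlt
      interval_cases p
      · have := hp 3 (by norm_num)
        rw [show 3+1 = 4 from rfl, A4, A3] at this; omega
      · have := hp 2 (by norm_num)
        rw [show 2+2 = 4 from rfl, A4, A2] at this; omega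
      · have := hp 1 (by norm_num)
        rw [show 1+3 = 4 from rfl, A4, A1] at this; omega
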